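/- arXiv:2106.02026 — 2 statements merged into one kernel-verified Lean document; each statement's English description precedes it below -/
import Mathlib

section
/- Let A be an n×n finite-upper-triangular matrix over ℤ ∪ {-∞} which is a finite-upper-triangular-W-bounded-difference matrix with zeros on the main diagonal. Define Ā by replacing every entry below the main diagonal (i > j) by W·(j - i). Then Ā is a W-bounded-difference matrix (for all adjacent entries, differences are at most W in absolute value), and for any similarly modified B̄, the max-plus product Ā ⋆ B̄ agrees with A ⋆ B on all entries (i,j) with i ≤ j. -/
private lemma maxplus_chainH {n : ℕ} (W : ℕ) (M : Fin n → Fin n → WithBot ℤ)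
    (hstep : ∀ (i j : Fin n) (h : (j : ℕ) + 1 < n), i ≤ j →
      M i ⟨(j : ℕ) + 1, h⟩ ≤ M i j + ((W : ℤ) : WithBot ℤ)) :
    ∀ (d : ℕ) (i j : Fin n) (h : (j : ℕ) + d < n), i ≤ j →
      M i ⟨(j : ℕ) + d, h⟩ ≤ M i j + ((((W : ℤ) * (d : ℤ) : ℤ)) : WithBot ℤ) := by
  intro d
  induction d with
  | zero =>
    intro i j h hij
    have e : (⟨(j : ℕ) + 0, h⟩ : Fin n) = j := by ext; simp
    rw [e]
    simp
  | succ d ih =>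
    intro i j h hij
    have h' : (j : ℕ) + d < n := by omega
    have h'' : ((⟨(j : ℕ) + d, h'⟩ : Fin n) : ℕ) + 1 < n := by show (j : ℕ) + d + 1 < n; omega
    have hij' : i ≤ (⟨(j : ℕ) + d, h'⟩ : Fin n) := by
      rw [Fin.le_def] at hij ⊢; simp; omega
    have h1 := hstep i ⟨(j : ℕ) + d, h'⟩ h'' hij'
    have heq : (⟨((⟨(j : ℕ) + d, h'⟩ : Fin n) : ℕ) + 1, h''⟩ : Fin n)
        = ⟨(j : ℕ) + (d + 1), h⟩ := by ext; simp; omega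
    rw [heq] at h1
    calc M i ⟨(j : ℕ) + (d + 1), h⟩ ≤ M i ⟨(j : ℕ) + d, h'⟩ + ((W : ℤ) : WithBot ℤ) := h1
      _ ≤ (M i j + ((((W : ℤ) * (d : ℤ) : ℤ)) : WithBot ℤ)) + ((W : ℤ) : WithBot ℤ) :=
          add_le_add_left (ih i j h' hij) _
      _ = M i j + ((((W : ℤ) * ((d + 1 : ℕ) : ℤ) : ℤ)) : WithBot ℤ) := by
          rw [add_assoc, ← WithBot.coe_add]
          have e2 : (W : ℤ) * (d : ℤ) + (W : ℤ) = (W : ℤ) * ((d + 1 : ℕ) : ℤ) := by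
            push_cast; ring
          rw [e2]

private lemma maxplus_chainV {n : ℕ} (W : ℕ) (M : Fin n → Fin n → WithBot ℤ)
    (hstep : ∀ (i j : Fin n) (h : (i : ℕ) + 1 < n), (i : ℕ) + 1 ≤ (j : ℕ) →
      M i j ≤ M ⟨(i : ℕ) + 1, h⟩ j + ((W : ℤ) : WithBot ℤ)) :
    ∀ (d : ℕ) (i j : Fin n) (h : (i : ℕ) + d < n), (i : ℕ) + d ≤ (j : ℕ) →
      M i j ≤ M ⟨(i : ℕ) + d, h⟩ j + ((((W : ℤ) * (d : ℤ) : ℤ)) : WithBot ℤ) := by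
  intro d
  induction d with
  | zero =>
    intro i j h hij
    have e : (⟨(i : ℕ) + 0, h⟩ : Fin n) = i := by ext; simp
    rw [e]
    simp
  | succ d ih =>
    intro i j h hij
    have h' : (i : ℕ) + d < n := by omega
    have h'' : ((⟨(i : ℕ) + d, h'⟩ : Fin n) : ℕ) + 1 < n := by show (i : ℕ) + d + 1 < n; omega
    have h1 := hstep ⟨(i : ℕ) + d, h'⟩ j h'' (by simp; omega)
    have heq : (⟨((⟨(i : ℕ) + d, h'⟩ : Fin n) : ℕ) + 1, h''⟩ : Fin n)
        = ⟨(i : ℕ) + (d + 1), h⟩ := by ext; simp; omega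
    rw [heq] at h1
    calc M i j ≤ M ⟨(i : ℕ) + d, h'⟩ j + ((((W : ℤ) * (d : ℤ) : ℤ)) : WithBot ℤ) :=
          ih i j h' (by omega)
      _ ≤ (M ⟨(i : ℕ) + (d + 1), h⟩ j + ((W : ℤ) : WithBot ℤ))
            + ((((W : ℤ) * (d : ℤ) : ℤ)) : WithBot ℤ) := add_le_add_left h1 _
      _ = M ⟨(i : ℕ) + (d + 1), h⟩ j + ((((W : ℤ) * ((d + 1 : ℕ) : ℤ) : ℤ)) : WithBot ℤ) := by
          rw [add_assoc, ← WithBot.coe_add]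
          have e2 : (W : ℤ) + (W : ℤ) * (d : ℤ) = (W : ℤ) * ((d + 1 : ℕ) : ℤ) := by
            push_cast; ring
          rw [e2]

/-- Filling the lower triangle of a finite-upper-triangular `W`-bounded-difference matrix
with zeros on the diagonal by `W·(j - i)` yields a `W`-bounded-difference matrix (all
entries finite, adjacent entries differ by at most `W`), and the max-plus product of two
such modified matrices agrees with the original product on all entries on or above the
main diagonal. -/
theorem maxplus_fill_lower_triangle {n : ℕ} (W : ℕ) (A B : Fin n → Fin n → WithBot ℤ)
    (hAtri : ∀ i j : Fin n, j < i → A i j = ⊥)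
    (hAfin : ∀ i j : Fin n, i ≤ j → ∃ x : ℤ, A i j = (x : WithBot ℤ))
    (hAdiag : ∀ i : Fin n, A i i = (0 : ℤ))
    (hAbdH : ∀ (i j : Fin n) (h : (j : ℕ) + 1 < n), i ≤ j →
        A i j ≤ A i ⟨(j : ℕ) + 1, h⟩ + ((W : ℤ) : WithBot ℤ) ∧
        A i ⟨(j : ℕ) + 1, h⟩ ≤ A i j + ((W : ℤ) : WithBot ℤ))
    (hAbdV : ∀ (i j : Fin n) (h : (i : ℕ) + 1 < n), (i : ℕ) + 1 ≤ (j : ℕ) →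
        A i j ≤ A ⟨(i : ℕ) + 1, h⟩ j + ((W : ℤ) : WithBot ℤ) ∧
        A ⟨(i : ℕ) + 1, h⟩ j ≤ A i j + ((W : ℤ) : WithBot ℤ))
    (hBtri : ∀ i j : Fin n, j < i → B i j = ⊥)
    (hBfin : ∀ i j : Fin n, i ≤ j → ∃ x : ℤ, B i j = (x : WithBot ℤ))
    (hBdiag : ∀ i : Fin n, B i i = (0 : ℤ))
    (hBbdH : ∀ (i j : Fin n) (h : (j : ℕ) + 1 < n), i ≤ j →
        B i j ≤ B i ⟨(j : ℕ) + 1, h⟩ + ((W : ℤ) : WithBot ℤ) ∧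
        B i ⟨(j : ℕ) + 1, h⟩ ≤ B i j + ((W : ℤ) : WithBot ℤ))
    (hBbdV : ∀ (i j : Fin n) (h : (i : ℕ) + 1 < n), (i : ℕ) + 1 ≤ (j : ℕ) →
        B i j ≤ B ⟨(i : ℕ) + 1, h⟩ j + ((W : ℤ) : WithBot ℤ) ∧
        B ⟨(i : ℕ) + 1, h⟩ j ≤ B i j + ((W : ℤ) : WithBot ℤ)) :
    letI Abar : Fin n → Fin n → WithBot ℤ :=
      fun i j => if i ≤ j then A i j else (((W : ℤ) * ((j : ℤ) - (i : ℤ)) : ℤ) : WithBot ℤ)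
    letI Bbar : Fin n → Fin n → WithBot ℤ :=
      fun i j => if i ≤ j then B i j else (((W : ℤ) * ((j : ℤ) - (i : ℤ)) : ℤ) : WithBot ℤ)
    (∀ i j : Fin n, ∃ x : ℤ, Abar i j = (x : WithBot ℤ)) ∧
    (∀ (i j : Fin n) (h : (j : ℕ) + 1 < n),
        Abar i j ≤ Abar i ⟨(j : ℕ) + 1, h⟩ + ((W : ℤ) : WithBot ℤ) ∧
        Abar i ⟨(j : ℕ) + 1, h⟩ ≤ Abar i j + ((W : ℤ) : WithBot ℤ)) ∧
    (∀ (i j : Fin n) (h : (i : ℕ) + 1 < n),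
        Abar i j ≤ Abar ⟨(i : ℕ) + 1, h⟩ j + ((W : ℤ) : WithBot ℤ) ∧
        Abar ⟨(i : ℕ) + 1, h⟩ j ≤ Abar i j + ((W : ℤ) : WithBot ℤ)) ∧
    (∀ i j : Fin n, i ≤ j →
        (Finset.univ.sup fun k => Abar i k + Bbar k j) =
          Finset.univ.sup fun k => A i k + B k j) := by
  set Abar : Fin n → Fin n → WithBot ℤ :=
    fun i j => if i ≤ j then A i j else (((W : ℤ) * ((j : ℤ) - (i : ℤ)) : ℤ) : WithBot ℤ)
    with hAbarDef
  set Bbar : Fin n → Fin n → WithBot ℤ :=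
    fun i j => if i ≤ j then B i j else (((W : ℤ) * ((j : ℤ) - (i : ℤ)) : ℤ) : WithBot ℤ)
    with hBbarDef
  have hW : (0 : ℤ) ≤ (W : ℤ) := Int.natCast_nonneg W
  have hAbar : ∀ i j : Fin n, Abar i j =
      if i ≤ j then A i j else (((W : ℤ) * ((j : ℤ) - (i : ℤ)) : ℤ) : WithBot ℤ) :=
    fun i j => rfl
  have hBbar : ∀ i j : Fin n, Bbar i j =
      if i ≤ j then B i j else (((W : ℤ) * ((j : ℤ) - (i : ℤ)) : ℤ) : WithBot ℤ) :=
    fun i j => rfl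
  have coe_le : ∀ x y z : ℤ, x ≤ y + z →
      (x : WithBot ℤ) ≤ (y : WithBot ℤ) + (z : WithBot ℤ) := by
    intro x y z h
    rw [← WithBot.coe_add]
    exact_mod_cast h
  refine ⟨?_, ?_, ?_, ?_⟩
  · -- finiteness
    intro i j
    rw [hAbar]
    by_cases h : i ≤ j
    · rw [if_pos h]; exact hAfin i j h
    · rw [if_neg h]; exact ⟨_, rfl⟩
  · -- horizontal bounds
    intro i j h
    have hj' : ((⟨(j : ℕ) + 1, h⟩ : Fin n) : ℕ) = (j : ℕ) + 1 := rfl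
    rcases le_or_gt (i : ℕ) (j : ℕ) with hij | hij
    · have h1 : i ≤ j := hij
      have h2 : i ≤ (⟨(j : ℕ) + 1, h⟩ : Fin n) := by rw [Fin.le_def]; omega
      rw [hAbar, hAbar, if_pos h1, if_pos h2]
      exact hAbdH i j h h1
    · rcases eq_or_lt_of_le (by omega : (j : ℕ) + 1 ≤ (i : ℕ)) with heq | hlt
      · have h2 : i ≤ (⟨(j : ℕ) + 1, h⟩ : Fin n) := by rw [Fin.le_def]; omega
        have h1 : ¬ i ≤ j := by rw [Fin.le_def]; omega
        have hii : (⟨(j : ℕ) + 1, h⟩ : Fin n) = i := by ext; omega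
        rw [hAbar, hAbar, if_pos h2, if_neg h1, hii, hAdiag]
        constructor
        · apply coe_le; push_cast; nlinarith
        · apply coe_le; push_cast; nlinarith
      · have h1 : ¬ i ≤ j := by rw [Fin.le_def]; omega
        have h2 : ¬ i ≤ (⟨(j : ℕ) + 1, h⟩ : Fin n) := by rw [Fin.le_def]; omega
        rw [hAbar, hAbar, if_neg h1, if_neg h2]
        constructor
        · apply coe_le; push_cast; nlinarith
        · apply coe_le; push_cast; nlinarith
  · -- vertical bounds
    intro i j h
    rcases le_or_gt ((i : ℕ) + 1) (j : ℕ) with hij | hij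
    · have h1 : i ≤ j := by rw [Fin.le_def]; omega
      have h2 : (⟨(i : ℕ) + 1, h⟩ : Fin n) ≤ j := by rw [Fin.le_def]; exact hij
      rw [hAbar, hAbar, if_pos h1, if_pos h2]
      exact hAbdV i j h hij
    · rcases eq_or_lt_of_le (by omega : (j : ℕ) ≤ (i : ℕ)) with heq | hlt
      · have h1 : i ≤ j := by rw [Fin.le_def]; omega
        have h2 : ¬ (⟨(i : ℕ) + 1, h⟩ : Fin n) ≤ j := by
          rw [Fin.le_def]; show ¬ ((i : ℕ) + 1 ≤ (j : ℕ)); omega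
        have hji : j = i := by ext; omega
        rw [hAbar, hAbar, if_pos h1, if_neg h2, hji, hAdiag]
        constructor
        · apply coe_le; push_cast; nlinarith
        · apply coe_le; push_cast; nlinarith
      · have h1 : ¬ i ≤ j := by rw [Fin.le_def]; omega
        have h2 : ¬ (⟨(i : ℕ) + 1, h⟩ : Fin n) ≤ j := by
          rw [Fin.le_def]; show ¬ ((i : ℕ) + 1 ≤ (j : ℕ)); omega
        rw [hAbar, hAbar, if_neg h1, if_neg h2]
        constructor
        · apply coe_le; push_cast; nlinarith
        · apply coe_le; push_cast; nlinarith
  · -- product agreement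
    intro i j hij
    apply le_antisymm
    · apply Finset.sup_le
      intro k _
      rcases lt_or_ge (k : ℕ) (i : ℕ) with hk | hk
      · -- k < i : use the vertical chain on B
        obtain ⟨b, hb⟩ := hBfin i j hij
        have hkj : k ≤ j := by rw [Fin.le_def] at hij ⊢; omega
        have hd : (k : ℕ) + ((i : ℕ) - (k : ℕ)) < n := by omega
        have hV := maxplus_chainV W B (fun i j h hij => (hBbdV i j h hij).1)
          ((i : ℕ) - (k : ℕ)) k j hd (by rw [Fin.le_def] at hij; omega)
        have hei : (⟨(k : ℕ) + ((i : ℕ) - (k : ℕ)), hd⟩ : Fin n) = i := by ext; simp; omega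
        rw [hei, hb] at hV
        refine le_trans ?_ (Finset.le_sup (Finset.mem_univ i))
        have hni : ¬ i ≤ k := by rw [Fin.le_def]; omega
        rw [hAbar, hBbar, if_neg hni, if_pos hkj, hAdiag, hb]
        calc ((((W : ℤ) * ((k : ℤ) - (i : ℤ))) : ℤ) : WithBot ℤ) + B k j
            ≤ ((((W : ℤ) * ((k : ℤ) - (i : ℤ))) : ℤ) : WithBot ℤ)
              + ((b : WithBot ℤ) + ((((W : ℤ) * ((((i : ℕ) - (k : ℕ)) : ℕ) : ℤ) : ℤ)) : WithBot ℤ)) :=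
              add_le_add_right hV _
          _ ≤ ((0 : ℤ) : WithBot ℤ) + (b : WithBot ℤ) := by
              rw [← WithBot.coe_add, ← WithBot.coe_add, ← WithBot.coe_add]
              apply WithBot.coe_le_coe.2
              have hc : ((((i : ℕ) - (k : ℕ)) : ℕ) : ℤ) = (i : ℤ) - (k : ℤ) := by
                push_cast; omega
              rw [hc]
              nlinarith
      · rcases le_or_gt (k : ℕ) (j : ℕ) with hk2 | hk2
        · -- i ≤ k ≤ j : terms agree
          refine le_trans (le_of_eq ?_) (Finset.le_sup (Finset.mem_univ k))
          rw [hAbar, hBbar, if_pos (show i ≤ k from hk), if_pos (show k ≤ j from hk2)]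
        · -- j < k : use the horizontal chain on A
          obtain ⟨a, ha⟩ := hAfin i j hij
          have hd : (j : ℕ) + ((k : ℕ) - (j : ℕ)) < n := by omega
          have hH := maxplus_chainH W A (fun i j h hij => (hAbdH i j h hij).2)
            ((k : ℕ) - (j : ℕ)) i j hd hij
          have hek : (⟨(j : ℕ) + ((k : ℕ) - (j : ℕ)), hd⟩ : Fin n) = k := by ext; simp; omega
          rw [hek, ha] at hH
          refine le_trans ?_ (Finset.le_sup (Finset.mem_univ j))
          have hnk : ¬ k ≤ j := by rw [Fin.le_def]; omega
          have hik : i ≤ k := by rw [Fin.le_def] at hij ⊢; omega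
          rw [hAbar, hBbar, if_pos hik, if_neg hnk, hBdiag, ha]
          calc A i k + ((((W : ℤ) * ((j : ℤ) - (k : ℤ))) : ℤ) : WithBot ℤ)
              ≤ ((a : WithBot ℤ) + ((((W : ℤ) * ((((k : ℕ) - (j : ℕ)) : ℕ) : ℤ) : ℤ)) : WithBot ℤ))
                + ((((W : ℤ) * ((j : ℤ) - (k : ℤ))) : ℤ) : WithBot ℤ) :=
                add_le_add_left hH _
            _ ≤ (a : WithBot ℤ) + ((0 : ℤ) : WithBot ℤ) := by
                rw [← WithBot.coe_add, ← WithBot.coe_add, ← WithBot.coe_add]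
                apply WithBot.coe_le_coe.2
                have hc : ((((k : ℕ) - (j : ℕ)) : ℕ) : ℤ) = (k : ℤ) - (j : ℤ) := by
                  push_cast; omega
                rw [hc]
                nlinarith
    · apply Finset.sup_le
      intro k _
      rcases lt_or_ge (k : ℕ) (i : ℕ) with hk | hk
      · have : A i k = ⊥ := hAtri i k hk
        rw [this, WithBot.bot_add]
        exact bot_le
      · rcases le_or_gt (k : ℕ) (j : ℕ) with hk2 | hk2
        · refine le_trans (le_of_eq ?_) (Finset.le_sup (Finset.mem_univ k))
          rw [hAbar, hBbar, if_pos (show i ≤ k from hk), if_pos (show k ≤ j from hk2)]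
        · have : B k j = ⊥ := hBtri k j hk2
          rw [this, WithBot.add_bot]
          exact bot_le
end

section
/- For strings s1, s3 and a string s2 of length m, define the (m+1)×(m+1) similarity matrix B(s) by B(s)_{ij} = sim(s, s2[i,j)) for i ≤ j and -∞ otherwise. Then B(s1 + s3)_{ij} = max_k ( B(s1)_{ik} + B(s3)_{kj} ), i.e., the similarity matrix of a concatenation is the max-plus product of the similarity matrices. -/
/-- A single string edit operation applied to one string: delete a character or
substitute a character. -/
inductive SStep {α : Type} : List α → List α → Prop
  | delete (pre : List α) (a : α) (post : List α) : SStep (pre ++ a :: post) (pre ++ post)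
  | subst (pre : List α) (a b : α) (post : List α) : SStep (pre ++ a :: post) (pre ++ b :: post)

/-- `SSteps n s t`: `t` is obtained from `s` by exactly `n` string edit operations. -/
inductive SSteps {α : Type} : ℕ → List α → List α → Prop
  | refl (s : List α) : SSteps 0 s s
  | tail {n : ℕ} {s t u : List α} : SSteps n s t → SStep t u → SSteps (n + 1) s u

/-- The (unit-cost) string edit distance: the minimum total number of operations applied
to `s` and `t` so that they become identical (equivalently, the minimum number of
insertions, deletions and substitutions transforming `s` into `t`). -/
noncomputable def edS {α : Type} (s t : List α) : ℕ :=
  sInf {k | ∃ (k1 k2 : ℕ) (u : List α), k = k1 + k2 ∧ SSteps k1 s u ∧ SSteps k2 t u}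

/-- The string similarity `sim(s, t) = |s| + |t| - ed(s, t)`. -/
noncomputable def simS {α : Type} (s t : List α) : ℤ :=
  (s.length : ℤ) + t.length - edS s t

/-- The substring `s[l, r)` (1-indexed, from the `l`-th through the `(r-1)`-th character). -/
def substr {α : Type} (s : List α) (l r : ℕ) : List α := (s.drop (l - 1)).take (r - l)

/-- The `(m+1) × (m+1)` similarity matrix of a string `s` against the substrings of `s2`:
entry `(i, j)` is `sim(s, s2[i, j))` for `1 ≤ i ≤ j ≤ m + 1` and `-∞` otherwise. -/
noncomputable def simMatS {α : Type} (s s2 : List α) : ℕ → ℕ → WithBot ℤ :=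
  fun i j =>
    if 1 ≤ i ∧ i ≤ j ∧ j ≤ s2.length + 1 then ((simS s (substr s2 i j) : ℤ) : WithBot ℤ)
    else ⊥

variable {α : Type}

lemma sstep_append_right {s t : List α} (h : SStep s t) (x : List α) :
    SStep (s ++ x) (t ++ x) := by
  cases h with
  | delete pre a post => simpa [List.append_assoc] using SStep.delete pre a (post ++ x)
  | subst pre a b post => simpa [List.append_assoc] using SStep.subst pre a b (post ++ x)

lemma sstep_append_left {s t : List α} (x : List α) (h : SStep s t) :
    SStep (x ++ s) (x ++ t) := by
  cases h with
  | delete pre a post => simpa [List.append_assoc] using SStep.delete (x ++ pre) a post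
  | subst pre a b post => simpa [List.append_assoc] using SStep.subst (x ++ pre) a b post

lemma ssteps_trans {m n : ℕ} {s t u : List α} (h1 : SSteps m s t) (h2 : SSteps n t u) :
    SSteps (m + n) s u := by
  induction h2 with
  | refl => exact h1
  | tail h step ih => exact SSteps.tail (ih h1) step

lemma ssteps_append_right {n : ℕ} {s t : List α} (h : SSteps n s t) (x : List α) :
    SSteps n (s ++ x) (t ++ x) := by
  induction h with
  | refl => exact SSteps.refl _
  | tail h step ih => exact SSteps.tail ih (sstep_append_right step x)

lemma ssteps_append_left {n : ℕ} (x : List α) {s t : List α} (h : SSteps n s t) :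
    SSteps n (x ++ s) (x ++ t) := by
  induction h with
  | refl => exact SSteps.refl _
  | tail h step ih => exact SSteps.tail ih (sstep_append_left x step)

lemma ssteps_append {m n : ℕ} {s t s' t' : List α} (h1 : SSteps m s t) (h2 : SSteps n s' t') :
    SSteps (m + n) (s ++ s') (t ++ t') :=
  ssteps_trans (ssteps_append_right h1 s') (ssteps_append_left t h2)

lemma ssteps_nil (s : List α) : SSteps s.length s [] := by
  induction s with
  | nil => exact SSteps.refl _
  | cons a s ih =>
      have h1 : SSteps 1 (a :: s) s := SSteps.tail (SSteps.refl _) (SStep.delete [] a s)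
      simpa [Nat.add_comm] using ssteps_trans h1 ih

lemma edS_nonempty (s t : List α) :
    {k | ∃ (k1 k2 : ℕ) (u : List α), k = k1 + k2 ∧ SSteps k1 s u ∧ SSteps k2 t u}.Nonempty :=
  ⟨s.length + t.length, s.length, t.length, [], rfl, ssteps_nil s, ssteps_nil t⟩

lemma edS_le {s t : List α} {k1 k2 : ℕ} {u : List α} (h1 : SSteps k1 s u) (h2 : SSteps k2 t u) :
    edS s t ≤ k1 + k2 :=
  Nat.sInf_le ⟨k1, k2, u, rfl, h1, h2⟩

lemma edS_spec (s t : List α) :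
    ∃ (k1 k2 : ℕ) (u : List α), edS s t = k1 + k2 ∧ SSteps k1 s u ∧ SSteps k2 t u :=
  Nat.sInf_mem (edS_nonempty s t)

lemma edS_concat_le (s1 s3 t1 t2 : List α) :
    edS (s1 ++ s3) (t1 ++ t2) ≤ edS s1 t1 + edS s3 t2 := by
  obtain ⟨a1, a2, u, h, hs, ht⟩ := edS_spec s1 t1
  obtain ⟨b1, b2, v, h', hs', ht'⟩ := edS_spec s3 t2
  calc edS (s1 ++ s3) (t1 ++ t2) ≤ (a1 + b1) + (a2 + b2) :=
        edS_le (ssteps_append hs hs') (ssteps_append ht ht')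
    _ = _ := by omega

lemma sstep_split {x y u : List α} (h : SStep (x ++ y) u) :
    (∃ x', u = x' ++ y ∧ SStep x x') ∨ (∃ y', u = x ++ y' ∧ SStep y y') := by
  generalize hs : x ++ y = s at h
  cases h with
  | delete pre a post =>
      rcases List.append_eq_append_iff.mp hs with ⟨a', h1, h2⟩ | ⟨c, h1, h2⟩
      · right
        refine ⟨a' ++ post, by rw [h1]; simp, ?_⟩
        rw [h2]; exact SStep.delete a' a post
      · cases c with
        | nil =>
            right
            refine ⟨post, by rw [h1]; simp, ?_⟩
            simp at h2
            rw [← h2]; exact SStep.delete [] a post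
        | cons a'' c' =>
            left
            obtain ⟨rfl, h3⟩ : a'' = a ∧ c' ++ y = post := by
              constructor <;> [skip; skip] <;> simp_all
            refine ⟨pre ++ c', by rw [← h3]; simp, ?_⟩
            rw [h1]; exact SStep.delete pre a'' c'
  | subst pre a b post =>
      rcases List.append_eq_append_iff.mp hs with ⟨a', h1, h2⟩ | ⟨c, h1, h2⟩
      · right
        refine ⟨a' ++ b :: post, by rw [h1]; simp, ?_⟩
        rw [h2]; exact SStep.subst a' a b post
      · cases c with
        | nil =>
            right
            refine ⟨b :: post, by rw [h1]; simp, ?_⟩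
            simp at h2
            rw [← h2]; exact SStep.subst [] a b post
        | cons a'' c' =>
            left
            obtain ⟨rfl, h3⟩ : a'' = a ∧ c' ++ y = post := by
              constructor <;> [skip; skip] <;> simp_all
            refine ⟨pre ++ b :: c', by rw [← h3]; simp, ?_⟩
            rw [h1]; exact SStep.subst pre a'' b c'

lemma sstep_split_target {w u1 u2 : List α} (h : SStep w (u1 ++ u2)) :
    ∃ w1 w2, w = w1 ++ w2 ∧ ((SStep w1 u1 ∧ w2 = u2) ∨ (w1 = u1 ∧ SStep w2 u2)) := by
  generalize hu : u1 ++ u2 = u at h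
  cases h with
  | delete pre a post =>
      rcases List.append_eq_append_iff.mp hu with ⟨a', h1, h2⟩ | ⟨c, h1, h2⟩
      · refine ⟨u1, a' ++ a :: post, by rw [h1]; simp, Or.inr ⟨rfl, ?_⟩⟩
        rw [h2]; exact SStep.delete a' a post
      · refine ⟨pre ++ a :: c, u2, by rw [h2]; simp, Or.inl ⟨?_, rfl⟩⟩
        rw [h1]; exact SStep.delete pre a c
  | subst pre a b post =>
      rcases List.append_eq_append_iff.mp hu with ⟨a', h1, h2⟩ | ⟨c, h1, h2⟩
      · refine ⟨u1, a' ++ a :: post, by rw [h1]; simp, Or.inr ⟨rfl, ?_⟩⟩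
        rw [h2]; exact SStep.subst a' a b post
      · cases c with
        | nil =>
            refine ⟨u1, a :: post, by rw [h1]; simp, Or.inr ⟨rfl, ?_⟩⟩
            simp at h2
            rw [← h2]; exact SStep.subst [] a b post
        | cons b'' c' =>
            obtain ⟨rfl, h3⟩ : b'' = b ∧ c' ++ u2 = post := by
              constructor <;> [skip; skip] <;> simp_all
            refine ⟨pre ++ a :: c', u2, by rw [← h3]; simp, Or.inl ⟨?_, rfl⟩⟩
            rw [h1]; exact SStep.subst pre a b'' c'

lemma ssteps_split {n : ℕ} {s u : List α} (h : SSteps n s u) :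
    ∀ x y, s = x ++ y →
      ∃ u1 u2 a b, u = u1 ++ u2 ∧ n = a + b ∧ SSteps a x u1 ∧ SSteps b y u2 := by
  induction h with
  | refl s => exact fun x y hs => ⟨x, y, 0, 0, hs, rfl, SSteps.refl _, SSteps.refl _⟩
  | tail h step ih =>
      intro x y hs
      obtain ⟨t1, t2, a, b, ht, hn, h1, h2⟩ := ih x y hs
      subst ht
      rcases sstep_split step with ⟨x', hu, hx⟩ | ⟨y', hu, hy⟩
      · exact ⟨x', t2, a + 1, b, hu, by omega, SSteps.tail h1 hx, h2⟩
      · exact ⟨t1, y', a, b + 1, hu, by omega, h1, SSteps.tail h2 hy⟩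

lemma ssteps_split_source {n : ℕ} {t u : List α} (h : SSteps n t u) :
    ∀ u1 u2, u = u1 ++ u2 →
      ∃ t1 t2 c d, t = t1 ++ t2 ∧ n = c + d ∧ SSteps c t1 u1 ∧ SSteps d t2 u2 := by
  induction h with
  | refl s => exact fun u1 u2 hu => ⟨u1, u2, 0, 0, hu, rfl, SSteps.refl _, SSteps.refl _⟩
  | tail h step ih =>
      intro u1 u2 hu
      subst hu
      obtain ⟨w1, w2, hw, hcase⟩ := sstep_split_target step
      obtain ⟨t1, t2, c, d, ht, hn, h1, h2⟩ := ih w1 w2 hw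
      rcases hcase with ⟨hs, rfl⟩ | ⟨rfl, hs⟩
      · exact ⟨t1, t2, c + 1, d, ht, by omega, SSteps.tail h1 hs, h2⟩
      · exact ⟨t1, t2, c, d + 1, ht, by omega, h1, SSteps.tail h2 hs⟩

lemma edS_concat_split (s1 s3 t : List α) :
    ∃ t1 t2, t = t1 ++ t2 ∧ edS s1 t1 + edS s3 t2 ≤ edS (s1 ++ s3) t := by
  obtain ⟨k1, k2, u, hk, h1, h2⟩ := edS_spec (s1 ++ s3) t
  obtain ⟨u1, u2, a, b, hu, hab, ha, hb⟩ := ssteps_split h1 s1 s3 rfl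
  subst hu
  obtain ⟨t1, t2, c, d, ht, hcd, hc, hd⟩ := ssteps_split_source h2 u1 u2 rfl
  refine ⟨t1, t2, ht, ?_⟩
  have e1 := edS_le ha hc
  have e2 := edS_le hb hd
  omega

lemma substr_split {s2 : List α} {i k j : ℕ} (h1 : 1 ≤ i) (h2 : i ≤ k) (h3 : k ≤ j) :
    substr s2 i j = substr s2 i k ++ substr s2 k j := by
  unfold substr
  have hd : List.drop (k - 1) s2 = List.drop (k - i) (List.drop (i - 1) s2) := by
    rw [List.drop_drop]; congr 1; omega
  rw [hd, (by omega : j - i = (k - i) + (j - k)), List.take_add]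

lemma substr_length {s2 : List α} {i j : ℕ} (h1 : 1 ≤ i) (h2 : i ≤ j)
    (h3 : j ≤ s2.length + 1) : (substr s2 i j).length = j - i := by
  unfold substr
  rw [List.length_take, List.length_drop]
  omega

lemma simS_concat_ge (s1 s3 t1 t2 : List α) :
    simS s1 t1 + simS s3 t2 ≤ simS (s1 ++ s3) (t1 ++ t2) := by
  have h := edS_concat_le s1 s3 t1 t2
  unfold simS
  rw [List.length_append, List.length_append]
  push_cast
  omega

/-- The similarity matrix of a concatenation is the max-plus product of the similarity
matrices: `B(s1 + s3)_{ij} = max_k ( B(s1)_{ik} + B(s3)_{kj} )`. -/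
theorem simMatS_concat_maxplus {α : Type} (s1 s3 s2 : List α) (i j : ℕ) :
    simMatS (s1 ++ s3) s2 i j =
      (Finset.Icc 1 (s2.length + 1)).sup fun k => simMatS s1 s2 i k + simMatS s3 s2 k j := by
  by_cases hc : 1 ≤ i ∧ i ≤ j ∧ j ≤ s2.length + 1
  · obtain ⟨h1, h2, h3⟩ := hc
    simp only [simMatS, if_pos (⟨h1, h2, h3⟩ : 1 ≤ i ∧ i ≤ j ∧ j ≤ s2.length + 1)]
    apply le_antisymm
    · -- use the optimal split
      obtain ⟨t1, t2, ht, hle⟩ := edS_concat_split s1 s3 (substr s2 i j)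
      set k := i + t1.length with hk
      have hlen : (substr s2 i j).length = j - i := substr_length h1 h2 h3
      have ht1len : t1.length ≤ j - i := by
        have := congrArg List.length ht
        rw [List.length_append] at this
        omega
      have hik : i ≤ k := by omega
      have hkj : k ≤ j := by omega
      have hsplit := substr_split h1 hik hkj (s2 := s2)
      have hlen1 : (substr s2 i k).length = k - i := substr_length h1 hik (by omega)
      have heq : t1 = substr s2 i k ∧ t2 = substr s2 k j := by
        have := List.append_inj (ht ▸ hsplit : t1 ++ t2 = substr s2 i k ++ substr s2 k j)
          (by omega)
        exact this
      have hmem : k ∈ Finset.Icc 1 (s2.length + 1) :=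
        Finset.mem_Icc.mpr ⟨by omega, by omega⟩
      refine le_trans ?_
        (Finset.le_sup (f := fun k => simMatS s1 s2 i k + simMatS s3 s2 k j) hmem)
      simp only [simMatS, if_pos (⟨h1, hik, by omega⟩ : 1 ≤ i ∧ i ≤ k ∧ k ≤ s2.length + 1),
        if_pos (⟨by omega, hkj, h3⟩ : 1 ≤ k ∧ k ≤ j ∧ j ≤ s2.length + 1)]
      rw [← WithBot.coe_add, WithBot.coe_le_coe, ← heq.1, ← heq.2]
      rw [ht] at hle
      unfold simS
      rw [ht, List.length_append, List.length_append]
      push_cast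
      omega
    · apply Finset.sup_le
      intro k hk
      rw [Finset.mem_Icc] at hk
      by_cases hk2 : i ≤ k ∧ k ≤ j
      · simp only [simMatS, if_pos (⟨h1, hk2.1, hk.2⟩ : 1 ≤ i ∧ i ≤ k ∧ k ≤ s2.length + 1),
          if_pos (⟨hk.1, hk2.2, h3⟩ : 1 ≤ k ∧ k ≤ j ∧ j ≤ s2.length + 1)]
        rw [← WithBot.coe_add, WithBot.coe_le_coe, substr_split h1 hk2.1 hk2.2]
        exact simS_concat_ge _ _ _ _
      · have hbot : simMatS s1 s2 i k = ⊥ ∨ simMatS s3 s2 k j = ⊥ := by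
          rcases Nat.lt_or_ge k i with h | h
          · left; simp only [simMatS]; rw [if_neg]; omega
          · right; simp only [simMatS]; rw [if_neg]; omega
        rcases hbot with h | h <;> simp only [simMatS] at h <;> simp [h]
  · simp only [simMatS, if_neg hc]
    symm
    rw [← le_bot_iff]
    apply Finset.sup_le
    intro k hk
    rw [Finset.mem_Icc] at hk
    have hbot : simMatS s1 s2 i k = ⊥ ∨ simMatS s3 s2 k j = ⊥ := by
      by_cases hik : 1 ≤ i ∧ i ≤ k ∧ k ≤ s2.length + 1
      · right; simp only [simMatS]; rw [if_neg]
        intro hkj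
        exact hc ⟨hik.1, le_trans hik.2.1 hkj.2.1, hkj.2.2⟩
      · left; simp only [simMatS]; rw [if_neg hik]
    rcases hbot with h | h <;> simp only [simMatS] at h <;> simp [h]
end
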